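/- arXiv:2009.03295 — 2 statements merged into one kernel-verified Lean document; each statement's English description precedes it below -/
import Mathlib

section
/- If D is a digraph that contains no necklace as a subdigraph, then the dichromatic number of D is countable; that is, V(D) admits a partition into countably many classes each of which induces a subdigraph with no directed cycle. -/
variable {V : Type*}

/-- Reachability from `a` to `b` by a directed walk staying inside the vertex set `S`. -/
def ReachIn (D : V → V → Prop) (S : Set V) (a b : V) : Prop :=
  a ∈ S ∧ b ∈ S ∧ Relation.ReflTransGen (fun x y => y ∈ S ∧ D x y) a b

/-- `C` is a strong component of the subdigraph of `D` induced on `S`. -/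
def IsSCCIn (D : V → V → Prop) (S : Set V) (C : Set V) : Prop :=
  ∃ a ∈ S, C = {b | ReachIn D S a b ∧ ReachIn D S b a}

/-- A directed ray in `D`. -/
def IsRay (D : V → V → Prop) (R : ℕ → V) : Prop :=
  Function.Injective R ∧ ∀ n, D (R n) (R (n + 1))

/-- A reverse directed ray in `D`. -/
def IsRevRay (D : V → V → Prop) (R : ℕ → V) : Prop :=
  Function.Injective R ∧ ∀ n, D (R (n + 1)) (R n)

/-- The ray `R` has a tail inside the vertex set `C`. -/
def HasTailIn (R : ℕ → V) (C : Set V) : Prop :=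
  ∃ n, ∀ m, n ≤ m → R m ∈ C

/-- A solid ray: for every finite `X` it has a tail in some strong component of `D − X`. -/
def Solid (D : V → V → Prop) (R : ℕ → V) : Prop :=
  IsRay D R ∧ ∀ X : Finset V, ∃ C, IsSCCIn D ((↑X : Set V)ᶜ) C ∧ HasTailIn R C

/-- Two solid rays are end-equivalent: for every finite `X` they have tails in the same
strong component of `D − X`. -/
def EndEquiv (D : V → V → Prop) (R R' : ℕ → V) : Prop :=
  ∀ X : Finset V, ∃ C, IsSCCIn D ((↑X : Set V)ᶜ) C ∧ HasTailIn R C ∧ HasTailIn R' C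

/-- `Ω` is an end of `D`: the class of solid rays equivalent to some solid ray. -/
def IsEnd (D : V → V → Prop) (Ω : Set (ℕ → V)) : Prop :=
  ∃ R, Solid D R ∧ Ω = {R' | Solid D R' ∧ EndEquiv D R R'}

/-- A (nonempty) directed path, recorded as its list of vertices. -/
def IsPathList (D : V → V → Prop) (l : List V) : Prop :=
  l ≠ [] ∧ l.Nodup ∧ l.Chain' D

/-- Infinitely many pairwise disjoint `A`–`B` paths in `D` (each meeting `A` precisely in its
first vertex and `B` precisely in its last vertex). -/
def DisjointPathsFrom (D : V → V → Prop) (A B : Set V) : Prop :=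
  ∃ P : ℕ → List V,
    (∀ k, IsPathList D (P k)) ∧
    (∀ j k, j ≠ k → ∀ x ∈ P j, x ∉ P k) ∧
    (∀ k, ∃ a, (P k).head? = some a ∧ a ∈ A) ∧
    (∀ k, ∃ b, (P k).getLast? = some b ∧ b ∈ B) ∧
    (∀ k, ∀ x ∈ (P k).tail, x ∉ A) ∧
    (∀ k, ∀ x ∈ (P k).dropLast, x ∉ B)

/-- A necklace in `D`: an inflated symmetric ray with finite branch sets (beads), given by its
beads together with the connecting (subdividing) paths in both directions. -/
structure Necklace (D : V → V → Prop) where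
  bead : ℕ → Set V
  fwd : ℕ → List V
  bwd : ℕ → List V
  bead_fin : ∀ n, (bead n).Finite
  bead_nonempty : ∀ n, (bead n).Nonempty
  bead_disj : ∀ m n, m ≠ n → Disjoint (bead m) (bead n)
  bead_strong : ∀ n, ∀ a ∈ bead n, ∀ b ∈ bead n, ReachIn D (bead n) a b
  fwd_path : ∀ n, IsPathList D (fwd n)
  bwd_path : ∀ n, IsPathList D (bwd n)
  fwd_head : ∀ n a, (fwd n).head? = some a → a ∈ bead n
  fwd_last : ∀ n b, (fwd n).getLast? = some b → b ∈ bead (n + 1)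
  bwd_head : ∀ n a, (bwd n).head? = some a → a ∈ bead (n + 1)
  bwd_last : ∀ n b, (bwd n).getLast? = some b → b ∈ bead n
  fwd_inner : ∀ n, ∀ x ∈ (fwd n).tail.dropLast, ∀ m, x ∉ bead m
  bwd_inner : ∀ n, ∀ x ∈ (bwd n).tail.dropLast, ∀ m, x ∉ bead m
  fwd_fwd_disj : ∀ m n, m ≠ n → ∀ x ∈ (fwd m).tail.dropLast, x ∉ (fwd n).tail.dropLast
  bwd_bwd_disj : ∀ m n, m ≠ n → ∀ x ∈ (bwd m).tail.dropLast, x ∉ (bwd n).tail.dropLast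
  fwd_bwd_disj : ∀ m n, ∀ x ∈ (fwd m).tail.dropLast, x ∉ (bwd n).tail.dropLast

/-- The vertex set of a necklace. -/
def Necklace.verts {D : V → V → Prop} (N : Necklace D) : Set V :=
  (⋃ n, N.bead n) ∪ {x | ∃ n, x ∈ N.fwd n ∨ x ∈ N.bwd n}

/-- A necklace is attached to `𝒰` if infinitely many of its beads meet every set in `𝒰`. -/
def Necklace.AttachedTo {D : V → V → Prop} (N : Necklace D) (𝒰 : Finset (Set V)) : Prop :=
  {n | ∀ U ∈ 𝒰, (N.bead n ∩ U).Nonempty}.Infinite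

/-- A necklace represents the end of the solid ray `R`: for every finite `X`, all but finitely
many beads lie in the strong component of `D − X` in which `R` has a tail. -/
def NecklaceRepresents {D : V → V → Prop} (N : Necklace D) (R : ℕ → V) : Prop :=
  ∀ X : Finset V, ∃ C, IsSCCIn D ((↑X : Set V)ᶜ) C ∧ HasTailIn R C ∧
    ∃ n₀, ∀ n, n₀ ≤ n → N.bead n ⊆ C

/-- `URankLE D 𝒰 S α`: the subdigraph of `D` induced on `S` has `𝒰`-rank at most `α`. -/
inductive URankLE (D : V → V → Prop) (𝒰 : Finset (Set V)) : Set V → Ordinal → Prop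
  | base (S : Set V) (α : Ordinal) (U : Set V) (hU : U ∈ 𝒰) (h : (U ∩ S).Finite) :
      URankLE D 𝒰 S α
  | step (S : Set V) (α : Ordinal) (X : Finset V) (r : Set V → Ordinal)
      (hr : ∀ C, IsSCCIn D (S \ ↑X) C → r C < α)
      (h : ∀ C, IsSCCIn D (S \ ↑X) C → URankLE D 𝒰 C (r C)) :
      URankLE D 𝒰 S α

/-- `D` (induced on `S`) has `𝒰`-rank exactly `α`. -/
def HasURank (D : V → V → Prop) (𝒰 : Finset (Set V)) (S : Set V) (α : Ordinal) : Prop :=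
  URankLE D 𝒰 S α ∧ ∀ β < α, ¬ URankLE D 𝒰 S β

/-- A vertex-direction of `D`. -/
def IsVertexDirection (D : V → V → Prop) (f : Finset V → Set V) : Prop :=
  (∀ X : Finset V, IsSCCIn D ((↑X : Set V)ᶜ) (f X)) ∧
  ∀ X Y : Finset V, X ⊆ Y → f Y ⊆ f X

/-- A separation `(A,B)` of `D`: `A ∪ B = V(D)` and no edge from `B∖A` to `A∖B`. -/
def IsSep (D : V → V → Prop) (A B : Set V) : Prop :=
  A ∪ B = Set.univ ∧ ∀ a ∈ B \ A, ∀ b ∈ A \ B, ¬ D a b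

/-- A finite order separation `(A,B)` points towards the vertex-direction `f`. -/
def PointsTowards (D : V → V → Prop) (f : Finset V → Set V) (A B : Set V)
    (h : (A ∩ B).Finite) : Prop :=
  f h.toFinset ⊆ B \ A

/-- A finite order separation `(A,B)` points away from the vertex-direction `f`. -/
def PointsAway (D : V → V → Prop) (f : Finset V → Set V) (A B : Set V)
    (h : (A ∩ B).Finite) : Prop :=
  f h.toFinset ⊆ A \ B

/-- The vertex `v` dominates the vertex-direction `f`. -/
def DomDir (D : V → V → Prop) (v : V) (f : Finset V → Set V) : Prop :=
  ∀ A B, IsSep D A B → ∀ h : (A ∩ B).Finite, PointsAway D f A B h → v ∈ A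

/-- An infinite `v`–`B` fan: infinitely many `v`–`B` paths meeting pairwise precisely in `v`. -/
def Fan (D : V → V → Prop) (v : V) (B : Set V) : Prop :=
  ∃ P : ℕ → List V,
    (∀ k, IsPathList D (P k)) ∧
    (∀ k, (P k).head? = some v) ∧
    (∀ k, 2 ≤ (P k).length) ∧
    (∀ k, ∃ b, (P k).getLast? = some b ∧ b ∈ B) ∧
    (∀ k, ∀ x ∈ (P k).dropLast, x ∉ B) ∧
    (∀ j k, j ≠ k → ∀ x ∈ (P j).tail, x ∉ (P k).tail)

/-- Limit edge between the ends of the solid rays `R` and `R'`. -/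
def LimitEdgeEE (D : V → V → Prop) (R R' : ℕ → V) : Prop :=
  ∀ (X : Finset V) C C', IsSCCIn D ((↑X : Set V)ᶜ) C → HasTailIn R C →
    IsSCCIn D ((↑X : Set V)ᶜ) C' → HasTailIn R' C' → C ≠ C' →
    ∃ a ∈ C, ∃ b ∈ C', D a b

/-- Limit edge from the vertex `v` to the end of the solid ray `R`. -/
def LimitEdgeVE (D : V → V → Prop) (v : V) (R : ℕ → V) : Prop :=
  ∀ (X : Finset V) C, IsSCCIn D ((↑X : Set V)ᶜ) C → HasTailIn R C → v ∉ C →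
    ∃ b ∈ C, D v b

/-- Limit edge from the end of the solid ray `R` to the vertex `v`. -/
def LimitEdgeEV (D : V → V → Prop) (R : ℕ → V) (v : V) : Prop :=
  ∀ (X : Finset V) C, IsSCCIn D ((↑X : Set V)ᶜ) C → HasTailIn R C → v ∉ C →
    ∃ a ∈ C, D a v

/-- A subdivided infinite out-star in `D` with centre `c`, given by its paths. -/
def IsStar (D : V → V → Prop) (c : V) (P : ℕ → List V) : Prop :=
  (∀ k, IsPathList D (P k)) ∧ (∀ k, (P k).head? = some c) ∧
  (∀ k, 2 ≤ (P k).length) ∧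
  (∀ j k, j ≠ k → ∀ x ∈ (P j).tail, x ∉ (P k).tail)

/-- A directed comb in `D` with spine `R`, given by its (pairwise disjoint) paths each meeting
`R` precisely in its first vertex. -/
def IsComb (D : V → V → Prop) (R : ℕ → V) (P : ℕ → List V) : Prop :=
  IsRay D R ∧ (∀ k, IsPathList D (P k)) ∧
  (∀ k, ∃ n, (P k).head? = some (R n)) ∧
  (∀ k, ∀ x ∈ (P k).tail, ∀ n, x ≠ R n) ∧
  (∀ j k, j ≠ k → ∀ x ∈ P j, x ∉ P k)

/-- A star in `D` whose `k`-th leaf is `a k`. -/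
def StarAttachedWith (D : V → V → Prop) (a : ℕ → V) : Prop :=
  ∃ c P, IsStar D c P ∧ ∀ k, (P k).getLast? = some (a k)

/-- A comb in `D` whose `k`-th tooth is `a k`. -/
def CombAttachedWith (D : V → V → Prop) (a : ℕ → V) : Prop :=
  ∃ R P, IsComb D R P ∧ ∀ k, (P k).getLast? = some (a k)

/-- `a` and `b` are consecutive entries of the list `l`. -/
def AdjInList (l : List V) (a b : V) : Prop :=
  ∃ l₁ l₂, l = l₁ ++ a :: b :: l₂

/-- The edge relation of (a subdigraph of `D` forming) the necklace `N`: all `D`-edges inside a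
bead together with the edges of the connecting paths. -/
def Necklace.edges {D : V → V → Prop} (N : Necklace D) (a b : V) : Prop :=
  D a b ∧ ((∃ n, a ∈ N.bead n ∧ b ∈ N.bead n) ∨
    (∃ n, AdjInList (N.fwd n) a b ∨ AdjInList (N.bwd n) a b))

/-- A generalized ray: a directed ray (`true`) or a reverse directed ray (`false`). -/
def IsGenRay (D : V → V → Prop) : Bool × (ℕ → V) → Prop
  | (true, R) => IsRay D R
  | (false, R) => IsRevRay D R

/-- Pre-end equivalence of generalized rays: infinitely many disjoint paths in both
directions. -/
def PreEquiv (D : V → V → Prop) (Q Q' : Bool × (ℕ → V)) : Prop :=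
  DisjointPathsFrom D (Set.range Q.2) (Set.range Q'.2) ∧
  DisjointPathsFrom D (Set.range Q'.2) (Set.range Q.2)

/-- The pre-end `γ` includes the end represented by the solid ray `R`. -/
def IncludesEnd (D : V → V → Prop) (γ : Set (Bool × (ℕ → V))) (R : ℕ → V) : Prop :=
  Solid D R ∧ ∀ R', Solid D R' → EndEquiv D R R' → (true, R') ∈ γ

/-- The set of edges of `D` from `A` to `B`. -/
def EdgesBetween (D : V → V → Prop) (A B : Set V) : Set (V × V) :=
  {e | D e.1 e.2 ∧ e.1 ∈ A ∧ e.2 ∈ B}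

/-- A bundle of `D − X`. -/
def IsBundle (D : V → V → Prop) (X : Finset V) (E : Set (V × V)) : Prop :=
  E.Nonempty ∧
  ((∃ C C', IsSCCIn D ((↑X : Set V)ᶜ) C ∧ IsSCCIn D ((↑X : Set V)ᶜ) C' ∧ C ≠ C' ∧
      E = EdgesBetween D C C') ∨
   (∃ v ∈ X, ∃ C, IsSCCIn D ((↑X : Set V)ᶜ) C ∧
      (E = EdgesBetween D {v} C ∨ E = EdgesBetween D C {v})))

/-- Compatibility `f(X) ⊇ f(Y)` between values of a direction (a strong component is regarded
as containing a bundle if it contains all its edges). -/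
def DirCompat : Set V ⊕ Set (V × V) → Set V ⊕ Set (V × V) → Prop
  | Sum.inl C, Sum.inl C' => C' ⊆ C
  | Sum.inl C, Sum.inr E' => ∀ e ∈ E', e.1 ∈ C ∧ e.2 ∈ C
  | Sum.inr _, Sum.inl _ => False
  | Sum.inr E, Sum.inr E' => E' ⊆ E

/-- A direction of `D`: maps each finite `X` to a strong component or a bundle of `D − X`,
compatibly. -/
def IsDirection (D : V → V → Prop) (f : Finset V → Set V ⊕ Set (V × V)) : Prop :=
  (∀ X : Finset V, (∃ C, IsSCCIn D ((↑X : Set V)ᶜ) C ∧ f X = Sum.inl C) ∨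
    (∃ E, IsBundle D X E ∧ f X = Sum.inr E)) ∧
  ∀ X Y : Finset V, X ⊆ Y → DirCompat (f X) (f Y)

/-- An edge-direction: a direction whose value is a bundle for some finite `X`. -/
def IsEdgeDirection (D : V → V → Prop) (f : Finset V → Set V ⊕ Set (V × V)) : Prop :=
  IsDirection D f ∧ ∃ (X : Finset V) (E : Set (V × V)), f X = Sum.inr E

/-- The three kinds of (potential) limit edges: end–end, vertex–end, end–vertex.
Ends are given as sets of (solid) rays. -/
inductive LimitEdgeObj (V : Type*) where
  | ee (Ω₁ Ω₂ : Set (ℕ → V))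
  | ve (v : V) (Ω : Set (ℕ → V))
  | ev (Ω : Set (ℕ → V)) (v : V)

/-- `l` is a limit edge of `D`. -/
def IsLimitEdge (D : V → V → Prop) : LimitEdgeObj V → Prop
  | LimitEdgeObj.ee Ω₁ Ω₂ => IsEnd D Ω₁ ∧ IsEnd D Ω₂ ∧ Ω₁ ≠ Ω₂ ∧
      ∀ R ∈ Ω₁, ∀ R' ∈ Ω₂, LimitEdgeEE D R R'
  | LimitEdgeObj.ve v Ω => IsEnd D Ω ∧ ∀ R ∈ Ω, LimitEdgeVE D v R
  | LimitEdgeObj.ev Ω v => IsEnd D Ω ∧ ∀ R ∈ Ω, LimitEdgeEV D R v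

/-- `f` agrees with the map `f_λ` for the end–end limit edge `Ω₁Ω₂`. -/
def AgreesEE (D : V → V → Prop) (Ω₁ Ω₂ : Set (ℕ → V))
    (f : Finset V → Set V ⊕ Set (V × V)) : Prop :=
  ∀ (X : Finset V), ∀ R ∈ Ω₁, ∀ R' ∈ Ω₂, ∀ C C',
    IsSCCIn D ((↑X : Set V)ᶜ) C → HasTailIn R C →
    IsSCCIn D ((↑X : Set V)ᶜ) C' → HasTailIn R' C' →
    (C = C' → f X = Sum.inl C) ∧ (C ≠ C' → f X = Sum.inr (EdgesBetween D C C'))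

/-- `f` agrees with the map `f_λ` for the vertex–end limit edge `vΩ`. -/
def AgreesVE (D : V → V → Prop) (v : V) (Ω : Set (ℕ → V))
    (f : Finset V → Set V ⊕ Set (V × V)) : Prop :=
  ∀ (X : Finset V), ∀ R ∈ Ω, ∀ C, IsSCCIn D ((↑X : Set V)ᶜ) C → HasTailIn R C →
    (v ∈ C → f X = Sum.inl C) ∧
    (v ∈ (↑X : Set V) → f X = Sum.inr (EdgesBetween D {v} C)) ∧
    (∀ C', IsSCCIn D ((↑X : Set V)ᶜ) C' → v ∈ C' → C' ≠ C →
      f X = Sum.inr (EdgesBetween D C' C))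

/-- `f` agrees with the map `f_λ` for the end–vertex limit edge `Ωv`. -/
def AgreesEV (D : V → V → Prop) (Ω : Set (ℕ → V)) (v : V)
    (f : Finset V → Set V ⊕ Set (V × V)) : Prop :=
  ∀ (X : Finset V), ∀ R ∈ Ω, ∀ C, IsSCCIn D ((↑X : Set V)ᶜ) C → HasTailIn R C →
    (v ∈ C → f X = Sum.inl C) ∧
    (v ∈ (↑X : Set V) → f X = Sum.inr (EdgesBetween D C {v})) ∧
    (∀ C', IsSCCIn D ((↑X : Set V)ᶜ) C' → v ∈ C' → C' ≠ C →
      f X = Sum.inr (EdgesBetween D C C'))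

/-- `f` agrees with `f_λ` for the limit edge `l`. -/
def Agrees (D : V → V → Prop) : LimitEdgeObj V → (Finset V → Set V ⊕ Set (V × V)) → Prop
  | LimitEdgeObj.ee Ω₁ Ω₂, f => AgreesEE D Ω₁ Ω₂ f
  | LimitEdgeObj.ve v Ω, f => AgreesVE D v Ω f
  | LimitEdgeObj.ev Ω v, f => AgreesEV D Ω v f

section Auxiliary

open Classical

variable {D : V → V → Prop} {T : Set V}

/-- reflexive transitive closure of the walk relation inside `T` -/
def Rtg (D : V → V → Prop) (T : Set V) (a b : V) : Prop :=
  Relation.ReflTransGen (fun x y => y ∈ T ∧ D x y) a b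

theorem reachIn_def {a b : V} :
    ReachIn D T a b ↔ a ∈ T ∧ b ∈ T ∧ Rtg D T a b := Iff.rfl

theorem Rtg.mono' {T' : Set V} (h : T ⊆ T') {a b : V}
    (hab : Rtg D T a b) : Rtg D T' a b :=
  Relation.ReflTransGen.mono (p := fun x y => y ∈ T' ∧ D x y) (fun _ _ hr => ⟨h hr.1, hr.2⟩) _ _ hab

theorem Rtg.mem_right {a b : V} (hab : Rtg D T a b) (ha : a ∈ T) : b ∈ T := by
  induction hab with
  | refl => exact ha
  | tail _ h _ => exact h.1

theorem Rtg.trans' {a b c : V} (h1 : Rtg D T a b) (h2 : Rtg D T b c) : Rtg D T a c :=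
  Relation.ReflTransGen.trans h1 h2

/-- from a chain list, every member is reachable from the head and reaches the last. -/
theorem chain_rtg (D : V → V → Prop) (T : Set V) :
    ∀ (l : List V) (a : V), List.Chain D a l → (∀ x ∈ a :: l, x ∈ T) →
    ∀ b ∈ a :: l, Rtg D T a b ∧ ∀ c, (a :: l).getLast? = some c → Rtg D T b c := by
  intro l
  induction l with
  | nil =>
    intro a _ _ b hb
    simp only [List.mem_singleton] at hb
    subst hb
    exact ⟨.refl, by intro c hc; simp at hc; subst hc; exact .refl⟩
  | cons d t ih =>
    intro a hch hT b hb
    rcases List.chain_cons.mp hch with ⟨had, hdt⟩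
    have hT' : ∀ x ∈ d :: t, x ∈ T := fun x hx => hT x (by
      simp only [List.mem_cons] at hx ⊢; tauto)
    have hlast : (a :: d :: t).getLast? = (d :: t).getLast? := List.getLast?_cons_cons
    have hstep : Rtg D T a d := Relation.ReflTransGen.single ⟨hT d (by simp), had⟩
    rcases List.mem_cons.mp hb with rfl | hb'
    · refine ⟨.refl, ?_⟩
      intro c hc
      rw [hlast] at hc
      exact hstep.trans' ((ih d hdt hT' d (by simp)).2 c hc)
    · have := ih d hdt hT' b hb'
      exact ⟨hstep.trans' this.1, fun c hc => this.2 c (by rwa [hlast] at hc)⟩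

/-- Turn a walk into a path (nodup) within `T`. -/
theorem rtg_to_path {u v : V} (hu : u ∈ T) (h : Rtg D T u v) :
    ∃ l : List V, IsPathList D l ∧ (∀ x ∈ l, x ∈ T) ∧
      l.head? = some u ∧ l.getLast? = some v := by
  induction h with
  | refl => exact ⟨[u], ⟨by simp, by simp, List.isChain_singleton u⟩, by simpa using hu, by simp, by simp⟩
  | tail hux hstep ih =>
    rename_i x y
    rcases ih with ⟨l, ⟨hne, hnd, hch⟩, hsub, hhd, hlast⟩
    by_cases hy : y ∈ l
    · rcases List.append_of_mem hy with ⟨s, t, rfl⟩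
      have hsl : (s ++ [y]).Sublist (s ++ y :: t) :=
        List.Sublist.append_left (by simp) s
      refine ⟨s ++ [y], ⟨by simp, hnd.sublist hsl, ?_⟩, ?_, ?_, List.getLast?_concat⟩
      · have : List.Chain' D ((s ++ [y]) ++ t) := by
          rwa [List.append_cons s y t] at hch
        exact (List.isChain_append.mp this).1
      · exact fun z hz => hsub z (hsl.mem hz)
      · cases s with
        | nil => simpa using hhd
        | cons a s' => simpa using hhd
    · refine ⟨l ++ [y], ⟨by simp, ?_, ?_⟩, ?_, ?_, List.getLast?_concat⟩
      · exact List.nodup_append'.mpr ⟨hnd, by simp, by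
          intro z hz hz'; simp at hz'; subst hz'; exact hy hz⟩
      · refine List.isChain_append.mpr ⟨hch, by simp, ?_⟩
        intro a ha b hb
        simp only [List.head?_cons, Option.mem_some_iff] at hb
        rw [hlast] at ha
        simp only [Option.mem_some_iff] at ha
        subst hb; subst ha
        exact hstep.2
      · intro z hz
        rcases List.mem_append.mp hz with h1 | h2
        · exact hsub z h1
        · simp at h2; subst h2; exact hstep.1
      · cases l with
        | nil => exact absurd rfl hne
        | cons a l' => simpa using hhd

/-- split a list at the first element satisfying `p` -/
theorem split_first {p : V → Prop} :
    ∀ (l : List V), (∃ x ∈ l, p x) →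
      ∃ l₁ x l₂, l = l₁ ++ x :: l₂ ∧ p x ∧ ∀ y ∈ l₁, ¬ p y := by
  intro l
  induction l with
  | nil => rintro ⟨x, hx, -⟩; simp at hx
  | cons a t ih =>
    intro hex
    by_cases ha : p a
    · exact ⟨[], a, t, by simp, ha, by simp⟩
    · have : ∃ x ∈ t, p x := by
        rcases hex with ⟨x, hx, hpx⟩
        rcases List.mem_cons.mp hx with rfl | hxt
        · exact absurd hpx ha
        · exact ⟨x, hxt, hpx⟩
      rcases ih this with ⟨l₁, x, l₂, rfl, hpx, hl₁⟩
      exact ⟨a :: l₁, x, l₂, by simp, hpx, by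
        intro y hy; rcases List.mem_cons.mp hy with rfl | hy'
        · exact ha
        · exact hl₁ y hy'⟩

/-- split a list at the last element satisfying `p` -/
theorem split_last {p : V → Prop} :
    ∀ (l : List V), (∃ x ∈ l, p x) →
      ∃ l₁ x l₂, l = l₁ ++ x :: l₂ ∧ p x ∧ ∀ y ∈ l₂, ¬ p y := by
  intro l
  induction l with
  | nil => rintro ⟨x, hx, -⟩; simp at hx
  | cons a t ih =>
    intro hex
    by_cases ht : ∃ x ∈ t, p x
    · rcases ih ht with ⟨l₁, x, l₂, rfl, hpx, hl₂⟩
      exact ⟨a :: l₁, x, l₂, by simp, hpx, hl₂⟩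
    · have hpa : p a := by
        rcases hex with ⟨x, hx, hpx⟩
        rcases List.mem_cons.mp hx with rfl | hxt
        · exact hpx
        · exact absurd ⟨x, hxt, hpx⟩ ht
      push_neg at ht
      exact ⟨[], a, t, by simp, hpa, ht⟩

end Auxiliary
section Auxiliary2

variable {D : V → V → Prop} {T : Set V}

theorem scc_subset' {C : Set V} (h : IsSCCIn D T C) : C ⊆ T := by
  obtain ⟨a, haT, rfl⟩ := h
  exact fun b hb => hb.1.2.1

theorem scc_base_mem {a : V} (haT : a ∈ T) :
    a ∈ {b | ReachIn D T a b ∧ ReachIn D T b a} :=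
  ⟨⟨haT, haT, .refl⟩, ⟨haT, haT, .refl⟩⟩

theorem scc_nonempty {C : Set V} (h : IsSCCIn D T C) : ∃ a, a ∈ C := by
  obtain ⟨a, haT, rfl⟩ := h
  exact ⟨a, scc_base_mem haT⟩

/-- a strong component is strongly connected within itself -/
theorem scc_strong {C : Set V} (h : IsSCCIn D T C) :
    ∀ u ∈ C, ∀ v ∈ C, ReachIn D C u v := by
  obtain ⟨a, haT, rfl⟩ := h
  set C := {b | ReachIn D T a b ∧ ReachIn D T b a} with hCdef
  have core : ∀ u, u ∈ C → ∀ v, Rtg D T u v → v ∈ C → Rtg D C u v := by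
    intro u hu v hrtg
    induction hrtg with
    | refl => intro _; exact .refl
    | tail hux hstep ih =>
      rename_i x y
      intro hv
      have huT : u ∈ T := hu.1.2.1
      have hxT : x ∈ T := Rtg.mem_right hux huT
      have hyT : y ∈ T := hstep.1
      have hxC : x ∈ C := by
        refine ⟨⟨haT, hxT, Rtg.trans' hu.1.2.2 hux⟩, ⟨hxT, haT, ?_⟩⟩
        exact Rtg.trans' (Relation.ReflTransGen.single ⟨hyT, hstep.2⟩) hv.2.2.2
      exact (ih hxC).tail ⟨hv, hstep.2⟩
  intro u hu v hv
  have : Rtg D T u v := Rtg.trans' hu.2.2.2 hv.1.2.2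
  exact ⟨hu, hv, core u hu v this hv⟩

theorem sc_of_hub {A : Set V} (h0 : V)
    (h : ∀ u ∈ A, Rtg D A u h0 ∧ Rtg D A h0 u) : ∀ u ∈ A, ∀ v ∈ A, ReachIn D A u v :=
  fun u hu v hv => ⟨hu, hv, (Rtg.trans' (h u hu).1 (h v hv).2)⟩

/-- equal strong-component classes from mutual reachability -/
theorem scc_eq_of_mutual {a x : V} (haT : a ∈ T) (hxT : x ∈ T)
    (h1 : Rtg D T a x) (h2 : Rtg D T x a) :
    {b | ReachIn D T a b ∧ ReachIn D T b a} = {b | ReachIn D T x b ∧ ReachIn D T b x} := by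
  ext b
  constructor
  · rintro ⟨⟨-, hbT, hab⟩, ⟨-, -, hba⟩⟩
    exact ⟨⟨hxT, hbT, Rtg.trans' h2 hab⟩, ⟨hbT, hxT, Rtg.trans' hba h1⟩⟩
  · rintro ⟨⟨-, hbT, hxb⟩, ⟨-, -, hbx⟩⟩
    exact ⟨⟨haT, hbT, Rtg.trans' h1 hxb⟩, ⟨hbT, haT, Rtg.trans' hbx h2⟩⟩

universe uu

/-- the digraph induced on `S` has an ordinal `𝒰`-rank (for `𝒰 = {univ}`) -/
def Ranked {V : Type uu} (D : V → V → Prop) (S : Set V) : Prop :=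
  ∃ α : Ordinal.{uu}, URankLE D ({Set.univ} : Finset (Set V)) S α

theorem unranked_step {V : Type uu} {D : V → V → Prop} {S : Set V}
    (hnr : ¬ Ranked D S) (X : Finset V) :
    ∃ C, IsSCCIn D (S \ ↑X) C ∧ ¬ Ranked D C := by
  by_contra hcon
  push_neg at hcon
  apply hnr
  classical
  refine ⟨Order.succ (⨆ c : {C : Set V // IsSCCIn D (S \ ↑X) C},
      Classical.choose (hcon c.1 c.2)), ?_⟩
  refine URankLE.step S _ X
    (fun C => if h : IsSCCIn D (S \ ↑X) C then Classical.choose (hcon C h) else 0) ?_ ?_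
  · intro C hC
    beta_reduce
    rw [dif_pos hC]
    refine lt_of_le_of_lt ?_ (Order.lt_succ _)
    exact le_ciSup (Ordinal.bddAbove_range _) (⟨C, hC⟩ : {C : Set V // IsSCCIn D (S \ ↑X) C})
  · intro C hC
    beta_reduce
    rw [dif_pos hC]
    exact Classical.choose_spec (hcon C hC)

end Auxiliary2
section Auxiliary3

/-- the strong component class of `v` in ground set `T` -/
def sccOf (D : V → V → Prop) (T : Set V) (v : V) : Set V :=
  {b | ReachIn D T v b ∧ ReachIn D T b v}

theorem urank_coloring {V : Type uu} {D : V → V → Prop} (hirr : ∀ a : V, ¬ D a a)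
    {S : Set V} {α : Ordinal.{uu}}
    (h : URankLE D ({Set.univ} : Finset (Set V)) S α) :
    ∃ c : V → ℕ, ∀ (n : ℕ) (a : V) (l : List V),
      (∀ x ∈ a :: l, c x = n) → (a :: l).Nodup → List.Chain D a (l ++ [a]) →
      (∀ x ∈ a :: l, x ∈ S) → False := by
  classical
  induction h with
  | base S α U hU hfin =>
    have hU' : U = Set.univ := by simpa using hU
    have hSfin : S.Finite := by rw [hU', Set.univ_inter] at hfin; exact hfin
    refine ⟨fun v => hSfin.toFinset.toList.idxOf v, ?_⟩
    intro n a l hc hnd hch hmem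
    cases l with
    | nil =>
      rcases List.chain_cons.mp hch with ⟨haa, -⟩
      exact hirr a haa
    | cons b l' =>
      have hab : a ≠ b := by
        intro hab
        exact (List.nodup_cons.mp hnd).1 (hab ▸ List.mem_cons_self)
      apply hab
      have ha : a ∈ hSfin.toFinset.toList := by
        rw [Finset.mem_toList, Set.Finite.mem_toFinset]; exact hmem a (by simp)
      have hb : b ∈ hSfin.toFinset.toList := by
        rw [Finset.mem_toList, Set.Finite.mem_toFinset]; exact hmem b (by simp)
      have h1 := hc a (by simp)
      have h2 := hc b (by simp)
      exact (List.idxOf_inj ha).mp (h1.trans h2.symm)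
  | step S α X r hr hder ih =>
    let F : ∀ C, IsSCCIn D (S \ ↑X) C → (V → ℕ) := fun C hC => Classical.choose (ih C hC)
    have Fspec : ∀ C hC, ∀ (n : ℕ) (a : V) (l : List V),
        (∀ x ∈ a :: l, F C hC x = n) → (a :: l).Nodup → List.Chain D a (l ++ [a]) →
        (∀ x ∈ a :: l, x ∈ C) → False := fun C hC => Classical.choose_spec (ih C hC)
    have Feq : ∀ C₁ h₁ C₂ h₂, C₁ = C₂ → F C₁ h₁ = F C₂ h₂ := by
      rintro C₁ h₁ C₂ h₂ rfl; rfl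
    have hscc : ∀ v, v ∈ S \ (↑X : Set V) → IsSCCIn D (S \ ↑X) (sccOf D (S \ ↑X) v) :=
      fun v hv => ⟨v, hv, rfl⟩
    refine ⟨fun v => if v ∈ X then 2 * X.toList.idxOf v + 1
      else if hv : v ∈ S \ (↑X : Set V) then
        2 * F (sccOf D (S \ ↑X) v) (hscc v hv) v + 2 else 0, ?_⟩
    intro n a l hc hnd hch hmem
    by_cases hX : ∃ u ∈ a :: l, u ∈ X
    · rcases hX with ⟨u, hu, huX⟩
      have key : ∀ x ∈ a :: l, x = u := by
        intro x hx
        have hcx := hc x hx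
        have hcu := hc u hu
        simp only [] at hcx hcu
        rw [if_pos huX] at hcu
        by_cases hxX : x ∈ X
        · rw [if_pos hxX] at hcx
          have : X.toList.idxOf x = X.toList.idxOf u := by omega
          exact (List.idxOf_inj (by rwa [Finset.mem_toList])
            ).mp this
        · rw [if_neg hxX] at hcx
          by_cases hxT : x ∈ S \ (↑X : Set V)
          · rw [dif_pos hxT] at hcx; exfalso; omega
          · rw [dif_neg hxT] at hcx; exfalso; omega
      cases l with
      | nil =>
        rcases List.chain_cons.mp hch with ⟨haa, -⟩
        exact hirr a haa
      | cons b l' =>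
        have hab : a = b := (key a (by simp)).trans (key b (by simp)).symm
        exact (List.nodup_cons.mp hnd).1 (hab ▸ List.mem_cons_self)
    · push_neg at hX
      have hmemT : ∀ x ∈ a :: l, x ∈ S \ (↑X : Set V) := fun x hx => ⟨hmem x hx, hX x hx⟩
      have hcyc : ∀ x ∈ a :: l, Rtg D (S \ ↑X) a x ∧ Rtg D (S \ ↑X) x a := by
        have hT2 : ∀ x ∈ a :: (l ++ [a]), x ∈ S \ (↑X : Set V) := by
          intro x hx
          rcases List.mem_cons.mp hx with rfl | hx'
          · exact hmemT x (by simp)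
          · rcases List.mem_append.mp hx' with h1 | h2
            · exact hmemT x (by simp [h1])
            · simp only [List.mem_singleton] at h2; subst h2; exact hmemT x (by simp)
        have hlast : (a :: (l ++ [a])).getLast? = some a := by
          rw [show a :: (l ++ [a]) = (a :: l) ++ [a] by simp]
          exact List.getLast?_concat
        intro x hx
        have hx2 : x ∈ a :: (l ++ [a]) := by
          rcases List.mem_cons.mp hx with rfl | hx' <;> simp [*]
        have := chain_rtg D (S \ ↑X) (l ++ [a]) a hch hT2 x hx2
        exact ⟨this.1, this.2 a hlast⟩
      have haT : a ∈ S \ (↑X : Set V) := hmemT a (by simp)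
      have hsccEq : ∀ x, ∀ hx : x ∈ a :: l, sccOf D (S \ ↑X) x = sccOf D (S \ ↑X) a :=
        fun x hx =>
          (scc_eq_of_mutual haT (hmemT x hx) (hcyc x hx).1 (hcyc x hx).2).symm
      have hxa : ∀ x ∈ a :: l, x ∈ sccOf D (S \ ↑X) a := fun x hx =>
        ⟨⟨haT, hmemT x hx, (hcyc x hx).1⟩, ⟨hmemT x hx, haT, (hcyc x hx).2⟩⟩
      refine Fspec (sccOf D (S \ ↑X) a) (hscc a haT)
        (F (sccOf D (S \ ↑X) a) (hscc a haT) a) a l ?_ hnd hch hxa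
      intro x hx
      have hcx := hc x hx
      have hca := hc a (List.mem_cons_self)
      simp only [] at hcx hca
      rw [if_neg (hX x hx), dif_pos (hmemT x hx)] at hcx
      rw [if_neg (hX a (List.mem_cons_self)), dif_pos haT] at hca
      have hFx := Feq (sccOf D (S \ ↑X) x) (hscc x (hmemT x hx))
        (sccOf D (S \ ↑X) a) (hscc a haT) (hsccEq x hx)
      rw [hFx] at hcx
      omega

end Auxiliary3
section Auxiliary4

theorem mem_of_getLast?' {l : List V} {a : V} : l.getLast? = some a → a ∈ l := by
  induction l with
  | nil => intro h; simp at h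
  | cons b t ih =>
    intro h
    cases t with
    | nil => simp at h; subst h; simp
    | cons c t' =>
      rw [List.getLast?_cons_cons] at h
      exact List.mem_cons_of_mem b (ih h)

theorem head_shape {l : List V} {a : V} (h : l.head? = some a) : l = a :: l.tail := by
  cases l with
  | nil => simp at h
  | cons b t => simp at h; subst h; rfl

theorem getLast_shape {l : List V} {a : V} : l.getLast? = some a → l = l.dropLast ++ [a] := by
  induction l with
  | nil => intro h; simp at h
  | cons b t ih =>
    intro h
    cases t with
    | nil => simp at h; subst h; simp
    | cons c t' =>
      rw [List.getLast?_cons_cons] at h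
      have := ih h
      calc b :: c :: t' = b :: ((c :: t').dropLast ++ [a]) := by rw [← this]
        _ = (b :: c :: t').dropLast ++ [a] := by simp

theorem getLast?_split {l₁ l₂ : List V} {a : V} :
    (l₁ ++ a :: l₂).getLast? = (a :: l₂).getLast? := by
  rw [List.getLast?_append]
  cases h : (a :: l₂).getLast? with
  | none => simp at h
  | some b => simp

theorem head?_split {l₁ l₂ : List V} {a : V} :
    (l₁ ++ [a]).head? = (l₁ ++ a :: l₂).head? := by
  rw [List.head?_append, List.head?_append]
  cases l₁ <;> simp

theorem chain_of_chain' {D : V → V → Prop} {a : V} {t : List V}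
    (h : List.Chain' D (a :: t)) : List.Chain D a t := h

theorem pl_prefix {D : V → V → Prop} {l₁ l₂ : List V} {a : V}
    (h : IsPathList D (l₁ ++ a :: l₂)) : IsPathList D (l₁ ++ [a]) := by
  obtain ⟨-, hnd, hch⟩ := h
  rw [List.append_cons] at hnd hch
  exact ⟨by simp, (List.nodup_append.mp hnd).1, (List.isChain_append.mp hch).1⟩

theorem pl_suffix {D : V → V → Prop} {l₁ l₂ : List V} {a : V}
    (h : IsPathList D (l₁ ++ a :: l₂)) : IsPathList D (a :: l₂) := by
  obtain ⟨-, hnd, hch⟩ := h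
  refine ⟨by simp, ?_, ?_⟩
  · exact hnd.sublist (List.sublist_append_right l₁ (a :: l₂))
  · rw [List.append_cons] at hch
    have h2 := (List.isChain_append.mp hch).2.1
    cases l₂ with
    | nil => exact List.isChain_singleton a
    | cons c t =>
      have h3 := (List.isChain_append.mp hch).2.2
      exact List.isChain_cons_cons.mpr ⟨h3 a (by simp) c (by simp), h2⟩

end Auxiliary4
section Auxiliary5

theorem mem_of_head?' {l : List V} {a : V} (h : l.head? = some a) : a ∈ l := by
  rw [head_shape h]; exact List.mem_cons_self

theorem path_rtg {D : V → V → Prop} {T : Set V} {l : List V} (hpl : IsPathList D l)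
    (hsub : ∀ x ∈ l, x ∈ T) {a c : V} (ha : l.head? = some a) (hc : l.getLast? = some c) :
    ∀ b ∈ l, Rtg D T a b ∧ Rtg D T b c := by
  have hsh := head_shape ha
  intro b hb
  rw [hsh] at hpl hsub hb hc
  have hch : List.Chain D a l.tail := chain_of_chain' hpl.2.2
  have := chain_rtg D T l.tail a hch hsub b hb
  exact ⟨this.1, this.2 c hc⟩

/-- the state of the recursive necklace construction -/
structure Stage {V : Type uu} (D : V → V → Prop) : Type uu where
  C : Set V
  p : V
  q : V
  hnr : ¬ Ranked D C
  hscc : ∀ u ∈ C, ∀ v ∈ C, ReachIn D C u v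
  hp : p ∈ C
  hq : q ∈ C

/-- data produced in one step of the necklace construction -/
structure StepData {V : Type uu} (D : V → V → Prop) (s : Stage D) : Type uu where
  s' : Stage D
  bead : Set V
  fwd : List V
  bwd : List V
  hbead_fin : bead.Finite
  hbead_sub : bead ⊆ s.C
  hbead_p : s.p ∈ bead
  hbead_q : s.q ∈ bead
  hbead_sc : ∀ u ∈ bead, ∀ v ∈ bead, ReachIn D bead u v
  hsub : s'.C ⊆ s.C
  hdisj : ∀ v ∈ s'.C, v ∉ bead
  hfwd : IsPathList D fwd
  hbwd : IsPathList D bwd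
  hfwd_sub : ∀ v ∈ fwd, v ∈ s.C
  hbwd_sub : ∀ v ∈ bwd, v ∈ s.C
  hfwd_head : ∃ z, fwd.head? = some z ∧ z ∈ bead
  hfwd_last : fwd.getLast? = some s'.p
  hbwd_head : bwd.head? = some s'.q
  hbwd_last : ∃ w, bwd.getLast? = some w ∧ w ∈ bead
  hfwd_int : ∀ v ∈ fwd.tail.dropLast, v ∉ bead ∧ v ∉ s'.C
  hbwd_int : ∀ v ∈ bwd.tail.dropLast, v ∉ bead ∧ v ∉ s'.C
  hcross : ∀ v ∈ fwd.tail.dropLast, v ∉ bwd.tail.dropLast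
  hfwd_C' : ∀ v ∈ fwd, v ∈ s'.C → v = s'.p
  hbwd_C' : ∀ v ∈ bwd, v ∈ s'.C → v = s'.q

end Auxiliary5
section Auxiliary6

theorem step_exists {V : Type uu} {D : V → V → Prop} (s : Stage D) :
    Nonempty (StepData D s) := by
  classical
  obtain ⟨C, p, q, hnr, hscc, hpC, hqC⟩ := s
  -- paths p → q and q → p inside C
  obtain ⟨L1, hL1, hL1sub, hL1h, hL1l⟩ := rtg_to_path hpC (hscc p hpC q hqC).2.2
  obtain ⟨L2, hL2, hL2sub, hL2h, hL2l⟩ := rtg_to_path hqC (hscc q hqC p hpC).2.2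
  set B₀ : Set V := {v | v ∈ L1} ∪ {v | v ∈ L2} with hB₀def
  have hB₀fin : B₀.Finite := L1.finite_toSet.union L2.finite_toSet
  have hB₀sub : B₀ ⊆ C := by rintro v (hv | hv); exacts [hL1sub v hv, hL2sub v hv]
  have hpB₀ : p ∈ B₀ := Or.inl (mem_of_head?' hL1h)
  have hqB₀ : q ∈ B₀ := Or.inl (mem_of_getLast?' hL1l)
  have hB₀sc : ∀ u ∈ B₀, ∀ v ∈ B₀, ReachIn D B₀ u v := by
    apply sc_of_hub p
    have hL1r := path_rtg hL1 (fun x hx => (Or.inl hx : x ∈ B₀)) hL1h hL1l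
    have hL2r := path_rtg hL2 (fun x hx => (Or.inr hx : x ∈ B₀)) hL2h hL2l
    have hqp : Rtg D B₀ q p := (hL2r q (mem_of_head?' hL2h)).2
    have hpq : Rtg D B₀ p q := (hL1r q (mem_of_getLast?' hL1l)).1
    rintro u (hu1 | hu2)
    · exact ⟨Rtg.trans' (hL1r u hu1).2 hqp, (hL1r u hu1).1⟩
    · exact ⟨(hL2r u hu2).2, Rtg.trans' hpq (hL2r u hu2).1⟩
  -- the next unranked strong component
  obtain ⟨C₁, hC₁scc, hC₁nr⟩ := unranked_step hnr hB₀fin.toFinset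
  have hC₁sub : C₁ ⊆ C \ B₀ := by
    have := scc_subset' hC₁scc
    rwa [Set.Finite.coe_toFinset] at this
  have hC₁C : C₁ ⊆ C := fun v hv => (hC₁sub hv).1
  have hC₁B₀ : ∀ v ∈ C₁, v ∉ B₀ := fun v hv => (hC₁sub hv).2
  have hC₁sc := scc_strong hC₁scc
  obtain ⟨a₁, ha₁⟩ := scc_nonempty hC₁scc
  -- forward connection : a path from p to a₁, trimmed
  obtain ⟨F1, hF1, hF1sub, hF1h, hF1l⟩ :=
    rtg_to_path hpC (hscc p hpC a₁ (hC₁C ha₁)).2.2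
  obtain ⟨A₁, x, A₂, hF1eq, hxC₁, hA₁⟩ :=
    split_first (p := (· ∈ C₁)) F1 ⟨a₁, mem_of_getLast?' hF1l, ha₁⟩
  subst hF1eq
  have hP₀ : IsPathList D (A₁ ++ [x]) := pl_prefix hF1
  have hP₀h : (A₁ ++ [x]).head? = some p := by rw [head?_split]; exact hF1h
  have hP₀sub : ∀ v ∈ A₁ ++ [x], v ∈ C := by
    intro v hv
    rcases List.mem_append.mp hv with h | h
    · exact hF1sub v (List.mem_append.mpr (Or.inl h))
    · simp only [List.mem_singleton] at h; subst h
      exact hF1sub v (List.mem_append.mpr (Or.inr (by simp)))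
  have hP₀C₁ : ∀ v ∈ A₁ ++ [x], v ∈ C₁ → v = x := by
    intro v hv hvC₁
    rcases List.mem_append.mp hv with h | h
    · exact absurd hvC₁ (hA₁ v h)
    · simpa using h
  obtain ⟨G₁, b0, G₂, hP₀eq, hb0B₀, hG₂⟩ :=
    split_last (p := (· ∈ B₀)) (A₁ ++ [x]) ⟨p, mem_of_head?' hP₀h, hpB₀⟩
  have hP₁ : IsPathList D (b0 :: G₂) := pl_suffix (hP₀eq ▸ hP₀)
  have hP₁l : (b0 :: G₂).getLast? = some x := by
    have h1 : (A₁ ++ [x]).getLast? = some x := List.getLast?_concat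
    rw [hP₀eq, getLast?_split] at h1; exact h1
  have hP₁mem : ∀ v ∈ b0 :: G₂, v ∈ A₁ ++ [x] := by
    intro v hv; rw [hP₀eq]; exact List.mem_append.mpr (Or.inr hv)
  have hP₁sub : ∀ v ∈ b0 :: G₂, v ∈ C := fun v hv => hP₀sub v (hP₁mem v hv)
  have hP₁C₁ : ∀ v ∈ b0 :: G₂, v ∈ C₁ → v = x := fun v hv => hP₀C₁ v (hP₁mem v hv)
  -- backward connection : a path from a₁ to p, trimmed
  obtain ⟨F2, hF2, hF2sub, hF2h, hF2l⟩ :=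
    rtg_to_path (hC₁C ha₁) (hscc a₁ (hC₁C ha₁) p hpC).2.2
  obtain ⟨B₁, y, B₂, hF2eq, hyC₁, hB₂⟩ :=
    split_last (p := (· ∈ C₁)) F2 ⟨a₁, mem_of_head?' hF2h, ha₁⟩
  subst hF2eq
  have hQ₀ : IsPathList D (y :: B₂) := pl_suffix hF2
  have hQ₀l : (y :: B₂).getLast? = some p := by rw [← getLast?_split]; exact hF2l
  have hQ₀sub : ∀ v ∈ y :: B₂, v ∈ C := by
    intro v hv
    exact hF2sub v (List.mem_append.mpr (Or.inr hv))
  have hQ₀C₁ : ∀ v ∈ y :: B₂, v ∈ C₁ → v = y := by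
    intro v hv hvC₁
    rcases List.mem_cons.mp hv with rfl | h
    · rfl
    · exact absurd hvC₁ (hB₂ v h)
  obtain ⟨H₁, b1, H₂, hQ₀eq, hb1B₀, hH₁⟩ :=
    split_first (p := (· ∈ B₀)) (y :: B₂) ⟨p, mem_of_getLast?' hQ₀l, hpB₀⟩
  have hQ₁ : IsPathList D (H₁ ++ [b1]) := pl_prefix (hQ₀eq ▸ hQ₀)
  have hQ₁h : (H₁ ++ [b1]).head? = some y := by
    rw [head?_split (l₂ := H₂), ← hQ₀eq]; rfl
  have hQ₁mem : ∀ v ∈ H₁ ++ [b1], v ∈ y :: B₂ := by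
    intro v hv
    rw [hQ₀eq]
    rcases List.mem_append.mp hv with h | h
    · exact List.mem_append.mpr (Or.inl h)
    · simp only [List.mem_singleton] at h; subst h
      exact List.mem_append.mpr (Or.inr (by simp))
  have hQ₁sub : ∀ v ∈ H₁ ++ [b1], v ∈ C := fun v hv => hQ₀sub v (hQ₁mem v hv)
  have hQ₁C₁ : ∀ v ∈ H₁ ++ [b1], v ∈ C₁ → v = y := fun v hv => hQ₀C₁ v (hQ₁mem v hv)
  have hyB₀ : y ∉ B₀ := hC₁B₀ y hyC₁
  have hH₁sh : H₁ = y :: H₁.tail := by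
    cases H₁ with
    | nil =>
      exfalso
      simp only [List.nil_append, List.head?_cons, Option.some.injEq] at hQ₁h
      exact hyB₀ (hQ₁h ▸ hb1B₀)
    | cons h t =>
      simp only [List.cons_append, List.head?_cons, Option.some.injEq] at hQ₁h
      subst hQ₁h; rfl
  have hH₁nd : H₁.Nodup := (List.nodup_append.mp hQ₁.2.1).1
  have hyHt : y ∉ H₁.tail := by
    have h2 := hH₁nd
    rw [hH₁sh] at h2
    exact (List.nodup_cons.mp h2).1
  have hHtQ₁ : ∀ v ∈ H₁.tail, v ∈ H₁ ++ [b1] :=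
    fun v hv => List.mem_append.mpr (Or.inl (List.mem_of_mem_tail hv))
  have hHtC₁ : ∀ v ∈ H₁.tail, v ∉ C₁ := by
    intro v hv hvC₁
    exact hyHt ((hQ₁C₁ v (hHtQ₁ v hv) hvC₁) ▸ hv)
  -- split the forward path at the last vertex lying on B₀ or on the interior of Q₁
  obtain ⟨M₁, z, M₂, hP₁eq, hz, hM₂⟩ :=
    split_last (p := fun v => v ∈ B₀ ∨ v ∈ H₁.tail) (b0 :: G₂)
      ⟨b0, List.mem_cons_self, Or.inl hb0B₀⟩
  have hzC₁ : z ∉ C₁ := by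
    intro hzC
    rcases hz with h | h
    · exact hC₁B₀ z hzC h
    · exact hHtC₁ z h hzC
  have hzx : z ≠ x := fun h => hzC₁ (h ▸ hxC₁)
  have hP₁l' : (z :: M₂).getLast? = some x := by
    rw [hP₁eq, getLast?_split] at hP₁l; exact hP₁l
  have hM₂ne : M₂ ≠ [] := by
    intro h; subst h
    simp only [List.getLast?_singleton, Option.some.injEq] at hP₁l'
    exact hzx hP₁l'
  have hM₂l : M₂.getLast? = some x := by
    cases M₂ with
    | nil => exact absurd rfl hM₂ne
    | cons c t => rwa [List.getLast?_cons_cons] at hP₁l'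
  have hxM₂ : x ∈ M₂ := mem_of_getLast?' hM₂l
  have hM₂sh : M₂ = M₂.dropLast ++ [x] := getLast_shape hM₂l
  have hP₁nd : (M₁ ++ z :: M₂).Nodup := (hP₁eq ▸ hP₁).2.1
  have hndmid := List.nodup_middle.mp hP₁nd
  have hzM₁M₂ : z ∉ M₁ ++ M₂ := (List.nodup_cons.mp hndmid).1
  have hM₁M₂ : M₁.Disjoint M₂ := (List.nodup_append'.mp (List.nodup_cons.mp hndmid).2).2.2
  have hxM₁ : x ∉ M₁ := fun h => hM₁M₂ h hxM₂
  have hxPpref : x ∉ M₁ ++ [z] := by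
    intro h
    rcases List.mem_append.mp h with h | h
    · exact hxM₁ h
    · simp only [List.mem_singleton] at h; exact hzx h.symm
  have hPprefP₁ : ∀ v ∈ M₁ ++ [z], v ∈ b0 :: G₂ := by
    intro v hv; rw [hP₁eq]
    rcases List.mem_append.mp hv with h | h
    · exact List.mem_append.mpr (Or.inl h)
    · simp only [List.mem_singleton] at h; subst h
      exact List.mem_append.mpr (Or.inr (List.mem_cons_self))
  have hPpl : IsPathList D (M₁ ++ [z]) := pl_prefix (hP₁eq ▸ hP₁)
  have hPph : (M₁ ++ [z]).head? = some b0 := by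
    rw [head?_split (l₂ := M₂), ← hP₁eq]; rfl
  -- split the backward path at the first vertex lying on B₀ or on Ppref
  obtain ⟨K₁, w, K₂, hQ₁eq, hw, hK₁⟩ :=
    split_first (p := fun v => v ∈ B₀ ∨ v ∈ M₁ ++ [z]) (H₁ ++ [b1])
      ⟨b1, List.mem_append.mpr (Or.inr (by simp)), Or.inl hb1B₀⟩
  have hwy : w ≠ y := by
    intro h; subst h
    rcases hw with h | h
    · exact hyB₀ h
    · exact hxPpref ((hP₁C₁ w (hPprefP₁ w h) hyC₁) ▸ h)
  have hK₁ne : K₁ ≠ [] := by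
    intro h
    have h2 := hQ₁h
    rw [hQ₁eq, h, List.nil_append, List.head?_cons] at h2
    exact hwy (Option.some.inj h2)
  have hK₁sh : K₁ = y :: K₁.tail := by
    cases K₁ with
    | nil => exact absurd rfl hK₁ne
    | cons h t =>
      have h2 := hQ₁h
      rw [hQ₁eq, List.cons_append, List.head?_cons] at h2
      rw [Option.some.inj h2]; rfl
  have hQ₁nd : (K₁ ++ w :: K₂).Nodup := hQ₁eq ▸ hQ₁.2.1
  have hK₁disj : K₁.Disjoint (w :: K₂) := (List.nodup_append'.mp hQ₁nd).2.2
  have hyK₁ : y ∈ K₁ := by rw [hK₁sh]; exact List.mem_cons_self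
  have hywK₂ : y ∉ w :: K₂ := fun h => hK₁disj hyK₁ h
  have hyKt : y ∉ K₁.tail := by
    have h2 : K₁.Nodup := (List.nodup_append.mp hQ₁nd).1
    rw [hK₁sh] at h2
    exact (List.nodup_cons.mp h2).1
  have hwK₂Q₁ : ∀ v ∈ w :: K₂, v ∈ H₁ ++ [b1] := by
    intro v hv; rw [hQ₁eq]; exact List.mem_append.mpr (Or.inr hv)
  have hK₁Q₁ : ∀ v ∈ K₁, v ∈ H₁ ++ [b1] := by
    intro v hv; rw [hQ₁eq]; exact List.mem_append.mpr (Or.inl hv)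
  have hKtC₁ : ∀ v ∈ K₁.tail, v ∉ C₁ := by
    intro v hv hvC₁
    exact hyKt ((hQ₁C₁ v (hK₁Q₁ v (List.mem_of_mem_tail hv)) hvC₁) ▸ hv)
  have hwKl : (w :: K₂).getLast? = some b1 := by
    have h2 : (H₁ ++ [b1]).getLast? = some b1 := List.getLast?_concat
    rw [hQ₁eq, getLast?_split] at h2; exact h2
  have hzwK : z ∈ H₁.tail → z ∈ w :: K₂ := by
    intro hzt
    have hzQ₁ : z ∈ K₁ ++ w :: K₂ := by
      rw [← hQ₁eq]; exact hHtQ₁ z hzt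
    rcases List.mem_append.mp hzQ₁ with h | h
    · exact absurd (Or.inr (List.mem_append.mpr (Or.inr (by simp)))) (hK₁ z h)
    · exact h
  -- the bead
  set bead : Set V := B₀ ∪ {v | v ∈ M₁ ++ [z]} ∪ {v | v ∈ w :: K₂} with hbeaddef
  have hPprefbead : ∀ v ∈ M₁ ++ [z], v ∈ bead := fun v h => Or.inl (Or.inr h)
  have hwK₂bead : ∀ v ∈ w :: K₂, v ∈ bead := fun v h => Or.inr h
  have hB₀bead : ∀ v ∈ B₀, v ∈ bead := fun v h => Or.inl (Or.inl h)
  have hwKpl : IsPathList D (w :: K₂) := pl_suffix (hQ₁eq ▸ hQ₁)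
  have hPpr := path_rtg hPpl hPprefbead hPph List.getLast?_concat
  have hWKr := path_rtg hwKpl hwK₂bead (List.head?_cons) hwKl
  have hB₀r : ∀ u ∈ B₀, Rtg D bead u p ∧ Rtg D bead p u := fun u hu =>
    ⟨Rtg.mono' hB₀bead (hB₀sc u hu p hpB₀).2.2,
     Rtg.mono' hB₀bead (hB₀sc p hpB₀ u hu).2.2⟩
  have hzp : Rtg D bead z p := by
    rcases hz with hzB | hzHt
    · exact (hB₀r z hzB).1
    · exact Rtg.trans' (hWKr z (hzwK hzHt)).2 (hB₀r b1 hb1B₀).1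
  have hpw : Rtg D bead p w := by
    rcases hw with hwB | hwP
    · exact (hB₀r w hwB).2
    · exact Rtg.trans' (hB₀r b0 hb0B₀).2 (hPpr w hwP).1
  have hbead_sc : ∀ u ∈ bead, ∀ v ∈ bead, ReachIn D bead u v := by
    apply sc_of_hub p
    rintro u ((huB | huP) | huW)
    · exact hB₀r u huB
    · exact ⟨Rtg.trans' (hPpr u huP).2 hzp, Rtg.trans' (hB₀r b0 hb0B₀).2 (hPpr u huP).1⟩
    · exact ⟨Rtg.trans' (hWKr u huW).2 (hB₀r b1 hb1B₀).1, Rtg.trans' hpw (hWKr u huW).1⟩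
  have hbead_fin : bead.Finite :=
    (hB₀fin.union (M₁ ++ [z]).finite_toSet).union (w :: K₂).finite_toSet
  have hbead_sub : bead ⊆ C := by
    rintro v ((h | h) | h)
    · exact hB₀sub h
    · exact hP₁sub v (hPprefP₁ v h)
    · exact hQ₁sub v (hwK₂Q₁ v h)
  have hbeadC₁ : ∀ v ∈ C₁, v ∉ bead := by
    rintro v hv ((h | h) | h)
    · exact hC₁B₀ v hv h
    · exact hxPpref ((hP₁C₁ v (hPprefP₁ v h) hv) ▸ h)
    · exact hywK₂ ((hQ₁C₁ v (hwK₂Q₁ v h) hv) ▸ h)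
  -- forward path facts
  have hfwdpl : IsPathList D (z :: M₂) := pl_suffix (hP₁eq ▸ hP₁)
  have hfwdP₁ : ∀ v ∈ z :: M₂, v ∈ b0 :: G₂ := by
    intro v hv; rw [hP₁eq]
    exact List.mem_append.mpr (Or.inr hv)
  have hfwd_sub : ∀ v ∈ z :: M₂, v ∈ C := fun v hv => hP₁sub v (hfwdP₁ v hv)
  have hfwd_C' : ∀ v ∈ z :: M₂, v ∈ C₁ → v = x := fun v hv => hP₁C₁ v (hfwdP₁ v hv)
  have hM₂dlM₂ : ∀ v ∈ M₂.dropLast, v ∈ M₂ := fun v hv => (List.dropLast_sublist M₂).mem hv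
  have hxM₂dl : x ∉ M₂.dropLast := by
    have hnd : M₂.Nodup := hP₁nd.sublist
      ((List.sublist_cons_self z M₂).trans (List.sublist_append_right M₁ (z :: M₂)))
    rw [hM₂sh] at hnd
    exact fun h => (List.nodup_append'.mp hnd).2.2 h (by simp)
  have hfwdint : ∀ v ∈ M₂.dropLast, (v ∉ bead ∧ v ∉ C₁) ∧ v ∉ H₁ ++ [b1] := by
    intro v hv
    have hvM₂ : v ∈ M₂ := hM₂dlM₂ v hv
    have hnPz := hM₂ v hvM₂
    push_neg at hnPz
    obtain ⟨hvB₀, hvHt⟩ := hnPz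
    have hvC₁ : v ∉ C₁ := by
      intro hvC
      exact hxM₂dl ((hfwd_C' v (List.mem_cons_of_mem z hvM₂) hvC) ▸ hv)
    have hvQ₁ : v ∉ H₁ ++ [b1] := by
      intro hvQ
      rcases List.mem_append.mp hvQ with h | h
      · rw [hH₁sh] at h
        rcases List.mem_cons.mp h with rfl | h
        · exact hvC₁ hyC₁
        · exact hvHt h
      · simp only [List.mem_singleton] at h; subst h; exact hvB₀ hb1B₀
    refine ⟨⟨?_, hvC₁⟩, hvQ₁⟩
    rintro ((h | h) | h)
    · exact hvB₀ h
    · rcases List.mem_append.mp h with h | h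
      · exact hM₁M₂ h hvM₂
      · simp only [List.mem_singleton] at h; subst h
        exact hzM₁M₂ (List.mem_append.mpr (Or.inr hvM₂))
    · exact hvQ₁ (hwK₂Q₁ v h)
  -- backward path facts
  have hbwdpl : IsPathList D (K₁ ++ [w]) := pl_prefix (hQ₁eq ▸ hQ₁)
  have hbwdh : (K₁ ++ [w]).head? = some y := by
    rw [head?_split (l₂ := K₂), ← hQ₁eq]; exact hQ₁h
  have hbwdQ₁ : ∀ v ∈ K₁ ++ [w], v ∈ H₁ ++ [b1] := by
    intro v hv; rw [hQ₁eq]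
    rcases List.mem_append.mp hv with h | h
    · exact List.mem_append.mpr (Or.inl h)
    · simp only [List.mem_singleton] at h; subst h
      exact List.mem_append.mpr (Or.inr (List.mem_cons_self))
  have hbwd_sub : ∀ v ∈ K₁ ++ [w], v ∈ C := fun v hv => hQ₁sub v (hbwdQ₁ v hv)
  have hbwd_C' : ∀ v ∈ K₁ ++ [w], v ∈ C₁ → v = y := fun v hv => hQ₁C₁ v (hbwdQ₁ v hv)
  have hbwdint : ∀ v ∈ K₁.tail, v ∉ bead ∧ v ∉ C₁ := by
    intro v hv
    have hvK₁ : v ∈ K₁ := List.mem_of_mem_tail hv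
    have hnPw := hK₁ v hvK₁
    push_neg at hnPw
    obtain ⟨hvB₀, hvP⟩ := hnPw
    refine ⟨?_, hKtC₁ v hv⟩
    rintro ((h | h) | h)
    · exact hvB₀ h
    · exact hvP h
    · exact hK₁disj hvK₁ h
  have hbwdint_eq : (K₁ ++ [w]).tail.dropLast = K₁.tail := by
    conv_lhs => rw [hK₁sh]
    simp [List.dropLast_concat]
  have hwbead : w ∈ bead := by
    rcases hw with h | h
    · exact hB₀bead w h
    · exact hPprefbead w h
  -- assemble
  refine ⟨⟨⟨C₁, x, y, hC₁nr, hC₁sc, hxC₁, hyC₁⟩, bead, z :: M₂, K₁ ++ [w],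
    hbead_fin, hbead_sub, hB₀bead p hpB₀, hB₀bead q hqB₀, hbead_sc, hC₁C, hbeadC₁,
    hfwdpl, hbwdpl, hfwd_sub, hbwd_sub,
    ⟨z, List.head?_cons, hPprefbead z (List.mem_append.mpr (Or.inr (by simp)))⟩,
    hP₁l', hbwdh, ⟨w, List.getLast?_concat, hwbead⟩, ?_, ?_, ?_, hfwd_C', hbwd_C'⟩⟩
  · intro v hv
    simp only [List.tail_cons] at hv
    exact (hfwdint v hv).1
  · intro v hv
    rw [hbwdint_eq] at hv
    exact hbwdint v hv
  · intro v hv hv2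
    simp only [List.tail_cons] at hv
    rw [hbwdint_eq] at hv2
    exact (hfwdint v hv).2 (hK₁Q₁ v (List.mem_of_mem_tail hv2))

end Auxiliary6
section Auxiliary7

theorem mem_of_int {l : List V} {v : V} (h : v ∈ l.tail.dropLast) : v ∈ l :=
  List.mem_of_mem_tail ((List.dropLast_sublist _).mem h)

noncomputable def stepOf {V : Type uu} {D : V → V → Prop} (s : Stage D) : StepData D s :=
  Classical.choice (step_exists s)

noncomputable def stages {V : Type uu} {D : V → V → Prop} (s0 : Stage D) : ℕ → Stage D
  | 0 => s0
  | n + 1 => (stepOf (stages s0 n)).s'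

theorem necklace_of_unranked {V : Type uu} {D : V → V → Prop}
    (h : ¬ Ranked D Set.univ) : Nonempty (Necklace D) := by
  classical
  obtain ⟨C₀, hscc₀, hnr₀⟩ := unranked_step h (∅ : Finset V)
  obtain ⟨a₀, ha₀⟩ := scc_nonempty hscc₀
  set s0 : Stage D := ⟨C₀, a₀, a₀, hnr₀, scc_strong hscc₀, ha₀, ha₀⟩ with hs0
  set S : ℕ → Stage D := stages s0 with hSdef
  have hmono : ∀ m n, m ≤ n → (S n).C ⊆ (S m).C := by
    intro m n hmn
    induction hmn with
    | refl => exact subset_rfl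
    | step h ih => exact fun v hv => ih ((stepOf _).hsub hv)
  have hpieceC : ∀ n v, (v ∈ (stepOf (S n)).bead ∨ v ∈ (stepOf (S n)).fwd ∨
      v ∈ (stepOf (S n)).bwd) → v ∈ (S n).C := by
    intro n v hv
    rcases hv with hv | hv | hv
    exacts [(stepOf (S n)).hbead_sub hv, (stepOf (S n)).hfwd_sub v hv,
      (stepOf (S n)).hbwd_sub v hv]
  have hbeadC : ∀ m n, m < n → ∀ v, v ∈ (S n).C → v ∉ (stepOf (S m)).bead := by
    intro m n hmn v hv hb
    exact (stepOf (S m)).hdisj v (hmono (m + 1) n hmn hv) hb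
  have hfwdC : ∀ m n, m < n → ∀ v, v ∈ (S n).C → v ∈ (stepOf (S m)).fwd →
      v ∈ (stepOf (S (m + 1))).bead := by
    intro m n hmn v hv hf
    have hveq := (stepOf (S m)).hfwd_C' v hf (hmono (m + 1) n hmn hv)
    rw [hveq]
    exact (stepOf (S (m + 1))).hbead_p
  have hbwdC : ∀ m n, m < n → ∀ v, v ∈ (S n).C → v ∈ (stepOf (S m)).bwd →
      v ∈ (stepOf (S (m + 1))).bead := by
    intro m n hmn v hv hf
    have hveq := (stepOf (S m)).hbwd_C' v hf (hmono (m + 1) n hmn hv)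
    rw [hveq]
    exact (stepOf (S (m + 1))).hbead_q
  have hINT : ∀ m n, m < n → ∀ v,
      (v ∈ ((stepOf (S n)).fwd).tail.dropLast ∨ v ∈ ((stepOf (S n)).bwd).tail.dropLast) →
      v ∉ (stepOf (S m)).bead ∧ v ∉ (stepOf (S m)).fwd ∧ v ∉ (stepOf (S m)).bwd := by
    intro m n hmn v hv
    have hvC : v ∈ (S n).C := by
      rcases hv with hv' | hv'
      · exact hpieceC n v (Or.inr (Or.inl (mem_of_int hv')))
      · exact hpieceC n v (Or.inr (Or.inr (mem_of_int hv')))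
    have hvnb : ∀ k, k < n → v ∉ (stepOf (S k)).bead := fun k hk => hbeadC k n hk v hvC
    refine ⟨hvnb m hmn, ?_, ?_⟩
    · intro hf
      have hb := hfwdC m n hmn v hvC hf
      rcases Nat.lt_or_ge (m + 1) n with h1 | h1
      · exact hvnb (m + 1) h1 hb
      · have hn1 : n = m + 1 := le_antisymm h1 hmn
        subst hn1
        rcases hv with hv' | hv'
        · exact ((stepOf (S (m + 1))).hfwd_int v hv').1 hb
        · exact ((stepOf (S (m + 1))).hbwd_int v hv').1 hb
    · intro hf
      have hb := hbwdC m n hmn v hvC hf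
      rcases Nat.lt_or_ge (m + 1) n with h1 | h1
      · exact hvnb (m + 1) h1 hb
      · have hn1 : n = m + 1 := le_antisymm h1 hmn
        subst hn1
        rcases hv with hv' | hv'
        · exact ((stepOf (S (m + 1))).hfwd_int v hv').1 hb
        · exact ((stepOf (S (m + 1))).hbwd_int v hv').1 hb
  refine ⟨⟨fun n => (stepOf (S n)).bead, fun n => (stepOf (S n)).fwd,
    fun n => (stepOf (S n)).bwd,
    fun n => (stepOf (S n)).hbead_fin,
    fun n => ⟨(S n).p, (stepOf (S n)).hbead_p⟩,
    ?_, fun n => (stepOf (S n)).hbead_sc,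
    fun n => (stepOf (S n)).hfwd, fun n => (stepOf (S n)).hbwd,
    ?_, ?_, ?_, ?_, ?_, ?_, ?_, ?_, ?_⟩⟩
  · -- bead_disj
    intro m n hmn
    rw [Set.disjoint_left]
    intro v hvm hvn
    rcases Nat.lt_or_gt_of_ne hmn with h1 | h1
    · exact hbeadC m n h1 v ((stepOf (S n)).hbead_sub hvn) hvm
    · exact hbeadC n m h1 v ((stepOf (S m)).hbead_sub hvm) hvn
  · -- fwd_head
    intro n a ha
    obtain ⟨z, hz, hzb⟩ := (stepOf (S n)).hfwd_head
    rw [hz] at ha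
    rw [← Option.some.inj ha]
    exact hzb
  · -- fwd_last
    intro n b hb
    rw [(stepOf (S n)).hfwd_last] at hb
    rw [← Option.some.inj hb]
    exact (stepOf (S (n + 1))).hbead_p
  · -- bwd_head
    intro n a ha
    rw [(stepOf (S n)).hbwd_head] at ha
    rw [← Option.some.inj ha]
    exact (stepOf (S (n + 1))).hbead_q
  · -- bwd_last
    intro n b hb
    obtain ⟨w, hw, hwb⟩ := (stepOf (S n)).hbwd_last
    rw [hw] at hb
    rw [← Option.some.inj hb]
    exact hwb
  · -- fwd_inner
    intro n x hx m
    rcases lt_trichotomy m n with h1 | h1 | h1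
    · exact (hINT m n h1 x (Or.inl hx)).1
    · subst h1
      exact ((stepOf (S m)).hfwd_int x hx).1
    · intro hb
      exact ((stepOf (S n)).hfwd_int x hx).2
        (hmono (n + 1) m h1 ((stepOf (S m)).hbead_sub hb))
  · -- bwd_inner
    intro n x hx m
    rcases lt_trichotomy m n with h1 | h1 | h1
    · exact (hINT m n h1 x (Or.inr hx)).1
    · subst h1
      exact ((stepOf (S m)).hbwd_int x hx).1
    · intro hb
      exact ((stepOf (S n)).hbwd_int x hx).2
        (hmono (n + 1) m h1 ((stepOf (S m)).hbead_sub hb))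
  · -- fwd_fwd_disj
    intro m n hmn x hxm hxn
    rcases Nat.lt_or_gt_of_ne hmn with h1 | h1
    · exact (hINT m n h1 x (Or.inl hxn)).2.1 (mem_of_int hxm)
    · exact (hINT n m h1 x (Or.inl hxm)).2.1 (mem_of_int hxn)
  · -- bwd_bwd_disj
    intro m n hmn x hxm hxn
    rcases Nat.lt_or_gt_of_ne hmn with h1 | h1
    · exact (hINT m n h1 x (Or.inr hxn)).2.2 (mem_of_int hxm)
    · exact (hINT n m h1 x (Or.inr hxm)).2.2 (mem_of_int hxn)
  · -- fwd_bwd_disj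
    intro m n x hxm hxn
    rcases lt_trichotomy m n with h1 | h1 | h1
    · exact (hINT m n h1 x (Or.inr hxn)).2.1 (mem_of_int hxm)
    · subst h1
      exact (stepOf (S m)).hcross x hxm hxn
    · exact (hINT n m h1 x (Or.inl hxm)).2.2 (mem_of_int hxn)

end Auxiliary7
/-- If a loopless digraph `D` contains no necklace, then its dichromatic number is countable:
the vertices can be partitioned into countably many classes inducing no directed cycle. -/
theorem dichromatic_number_countable (D : V → V → Prop) (hirr : ∀ a : V, ¬ D a a)
    (h : IsEmpty (Necklace D)) :
    ∃ f : V → ℕ, ∀ n : ℕ, ¬ ∃ (a : V) (l : List V),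
      (∀ x ∈ a :: l, f x = n) ∧ (a :: l).Nodup ∧ List.Chain D a (l ++ [a]) := by
  by_cases hR : Ranked D Set.univ
  · obtain ⟨α, hα⟩ := hR
    obtain ⟨c, hc⟩ := urank_coloring hirr hα
    refine ⟨c, ?_⟩
    rintro n ⟨a, l, h1, h2, h3⟩
    exact hc n a l h1 h2 h3 (fun x _ => Set.mem_univ x)
  · obtain ⟨N⟩ := necklace_of_unranked hR
    exact (h.false N).elim
end

section
/- Let D be a digraph, f a vertex-direction of D, and (A₁,B₁), (A₂,B₂) finite order separations of D. If both point towards f, then (A₁ ∪ A₂, B₁ ∩ B₂) points towards f; if both point away from f, then (A₁ ∩ A₂, B₁ ∪ B₂) points away from f. -/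
variable {V : Type*}

lemma reach_stay {D : V → V → Prop} {A B : Set V} (hs : IsSep D A B) {a b : V}
    (h : Relation.ReflTransGen (fun x y => y ∈ (A ∩ B)ᶜ ∧ D x y) a b) (ha : a ∈ B \ A) :
    b ∈ B \ A := by
  induction h with
  | refl => exact ha
  | @tail c d _ hstep ih =>
    have hd : d ∈ (A ∩ B)ᶜ := hstep.1
    have hun : d ∈ A ∪ B := by rw [hs.1]; trivial
    rcases hun with hA | hB
    · exact absurd hstep.2 (hs.2 c ih d ⟨hA, fun hB => hd ⟨hA, hB⟩⟩)
    · exact ⟨hB, fun hA => hd ⟨hA, hB⟩⟩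

/-- Suprema of separations pointing towards a vertex-direction point towards it; infima of
separations pointing away point away. -/
theorem sep_sup_inf_points (D : V → V → Prop) (f : Finset V → Set V)
    (hf : IsVertexDirection D f) (A₁ B₁ A₂ B₂ : Set V)
    (hs₁ : IsSep D A₁ B₁) (hs₂ : IsSep D A₂ B₂)
    (h₁ : (A₁ ∩ B₁).Finite) (h₂ : (A₂ ∩ B₂).Finite)
    (hsup : ((A₁ ∪ A₂) ∩ (B₁ ∩ B₂)).Finite) (hinf : ((A₁ ∩ A₂) ∩ (B₁ ∪ B₂)).Finite) :
    (PointsTowards D f A₁ B₁ h₁ → PointsTowards D f A₂ B₂ h₂ →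
      PointsTowards D f (A₁ ∪ A₂) (B₁ ∩ B₂) hsup) ∧
    (PointsAway D f A₁ B₁ h₁ → PointsAway D f A₂ B₂ h₂ →
      PointsAway D f (A₁ ∩ A₂) (B₁ ∪ B₂) hinf) := by
  classical
  obtain ⟨hscc, hmono⟩ := hf
  constructor
  · -- sup part
    intro ht₁ ht₂
    have hsep : IsSep D (A₁ ∪ A₂) (B₁ ∩ B₂) := by
      constructor
      · ext x; simp only [Set.mem_union, Set.mem_inter_iff, Set.mem_univ, iff_true]
        have u1 : x ∈ A₁ ∪ B₁ := by rw [hs₁.1]; trivial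
        have u2 : x ∈ A₂ ∪ B₂ := by rw [hs₂.1]; trivial
        simp only [Set.mem_union] at u1 u2; tauto
      · rintro a ⟨⟨haB₁, haB₂⟩, haA⟩ b ⟨hbA, hbB⟩
        simp only [Set.mem_union, not_or] at haA
        rcases Classical.em (b ∈ B₁) with hb1 | hb1
        · have hb2 : b ∉ B₂ := fun h => hbB ⟨hb1, h⟩
          have hbA2 : b ∈ A₂ := by
            have hu : b ∈ A₂ ∪ B₂ := by rw [hs₂.1]; trivial
            rcases hu with h | h
            · exact h
            · exact absurd h hb2
          exact hs₂.2 a ⟨haB₂, haA.2⟩ b ⟨hbA2, hb2⟩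
        · have hbA1 : b ∈ A₁ := by
            have hu : b ∈ A₁ ∪ B₁ := by rw [hs₁.1]; trivial
            rcases hu with h | h
            · exact h
            · exact absurd h hb1
          exact hs₁.2 a ⟨haB₁, haA.1⟩ b ⟨hbA1, hb1⟩
    set Z : Finset V := h₁.toFinset ∪ h₂.toFinset ∪ hsup.toFinset with hZ
    have hZ1 : h₁.toFinset ⊆ Z := by intro x hx; simp only [hZ, Finset.mem_union]; tauto
    have hZ2 : h₂.toFinset ⊆ Z := by intro x hx; simp only [hZ, Finset.mem_union]; tauto
    have hZs : hsup.toFinset ⊆ Z := by intro x hx; simp only [hZ, Finset.mem_union]; tauto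
    obtain ⟨p, hpZ, hpC⟩ := hscc Z
    have hp : p ∈ f Z := by
      rw [hpC]; exact ⟨⟨hpZ, hpZ, .refl⟩, ⟨hpZ, hpZ, .refl⟩⟩
    have hp1 : p ∈ B₁ \ A₁ := ht₁ (hmono _ _ hZ1 hp)
    have hp2 : p ∈ B₂ \ A₂ := ht₂ (hmono _ _ hZ2 hp)
    have hps : p ∈ f hsup.toFinset := hmono _ _ hZs hp
    intro x hx
    obtain ⟨a₀, ha₀, hC⟩ := hscc hsup.toFinset
    have hcoe : (↑hsup.toFinset : Set V)ᶜ = ((A₁ ∪ A₂) ∩ (B₁ ∩ B₂))ᶜ := by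
      rw [Set.Finite.coe_toFinset]
    rw [hC] at hx hps
    obtain ⟨⟨-, -, rt1⟩, -⟩ := hx
    obtain ⟨-, ⟨-, -, rt2⟩⟩ := hps
    rw [hcoe] at rt1 rt2
    have : x ∈ (B₁ ∩ B₂) \ (A₁ ∪ A₂) :=
      reach_stay hsep (rt2.trans rt1)
        ⟨⟨hp1.1, hp2.1⟩, by simp only [Set.mem_union, not_or]; exact ⟨hp1.2, hp2.2⟩⟩
    exact this
  · -- inf part
    intro ht₁ ht₂
    have hsep : IsSep D (A₁ ∩ A₂) (B₁ ∪ B₂) := by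
      constructor
      · ext x; simp only [Set.mem_union, Set.mem_inter_iff, Set.mem_univ, iff_true]
        have u1 : x ∈ A₁ ∪ B₁ := by rw [hs₁.1]; trivial
        have u2 : x ∈ A₂ ∪ B₂ := by rw [hs₂.1]; trivial
        simp only [Set.mem_union] at u1 u2; tauto
      · rintro a ⟨haB, haA⟩ b ⟨⟨hbA₁, hbA₂⟩, hbB⟩
        simp only [Set.mem_union, not_or] at hbB
        simp only [Set.mem_inter_iff, not_and] at haA
        rcases Classical.em (a ∈ A₁) with ha1 | ha1
        · have ha2 : a ∉ A₂ := haA ha1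
          have haB2 : a ∈ B₂ := by
            have hu : a ∈ A₂ ∪ B₂ := by rw [hs₂.1]; trivial
            rcases hu with h | h
            · exact absurd h ha2
            · exact h
          exact hs₂.2 a ⟨haB2, ha2⟩ b ⟨hbA₂, hbB.2⟩
        · have haB1 : a ∈ B₁ := by
            have hu : a ∈ A₁ ∪ B₁ := by rw [hs₁.1]; trivial
            rcases hu with h | h
            · exact absurd h ha1
            · exact h
          exact hs₁.2 a ⟨haB1, ha1⟩ b ⟨hbA₁, hbB.1⟩
    set Z : Finset V := h₁.toFinset ∪ h₂.toFinset ∪ hinf.toFinset with hZ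
    have hZ1 : h₁.toFinset ⊆ Z := by intro x hx; simp only [hZ, Finset.mem_union]; tauto
    have hZ2 : h₂.toFinset ⊆ Z := by intro x hx; simp only [hZ, Finset.mem_union]; tauto
    have hZs : hinf.toFinset ⊆ Z := by intro x hx; simp only [hZ, Finset.mem_union]; tauto
    obtain ⟨p, hpZ, hpC⟩ := hscc Z
    have hp : p ∈ f Z := by
      rw [hpC]; exact ⟨⟨hpZ, hpZ, .refl⟩, ⟨hpZ, hpZ, .refl⟩⟩
    have hp1 : p ∈ A₁ \ B₁ := ht₁ (hmono _ _ hZ1 hp)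
    have hp2 : p ∈ A₂ \ B₂ := ht₂ (hmono _ _ hZ2 hp)
    have hps : p ∈ f hinf.toFinset := hmono _ _ hZs hp
    intro x hx
    obtain ⟨a₀, ha₀, hC⟩ := hscc hinf.toFinset
    have hcoe : (↑hinf.toFinset : Set V)ᶜ = ((A₁ ∩ A₂) ∩ (B₁ ∪ B₂))ᶜ := by
      rw [Set.Finite.coe_toFinset]
    rw [hC] at hx hps
    obtain ⟨⟨-, hxS, rt1⟩, ⟨-, -, rt2⟩⟩ := hx
    obtain ⟨⟨-, -, rt3⟩, -⟩ := hps
    rw [hcoe] at rt1 rt2 rt3 hxS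
    -- x ∈ complement of separator; show x ∈ (A₁∩A₂)\(B₁∪B₂)
    by_contra hxn
    have hxA : x ∉ A₁ ∩ A₂ := fun hA => hxn ⟨hA, fun hB => hxS ⟨hA, hB⟩⟩
    have hxB : x ∈ (B₁ ∪ B₂) \ (A₁ ∩ A₂) := by
      refine ⟨?_, hxA⟩
      rcases Classical.em (x ∈ A₁) with h | h
      · have h2 : x ∉ A₂ := fun h2 => hxA ⟨h, h2⟩
        have hu : x ∈ A₂ ∪ B₂ := by rw [hs₂.1]; trivial
        rcases hu with hh | hh
        · exact absurd hh h2
        · exact Or.inr hh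
      · have hu : x ∈ A₁ ∪ B₁ := by rw [hs₁.1]; trivial
        rcases hu with hh | hh
        · exact absurd hh h
        · exact Or.inl hh
    have hpB : p ∈ (B₁ ∪ B₂) \ (A₁ ∩ A₂) :=
      reach_stay hsep (rt2.trans rt3) hxB
    rcases hpB.1 with h | h
    · exact hp1.2 h
    · exact hp2.2 h
end
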